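/- Let A be a Banach algebra, f ∈ A*, and suppose (w_n) is an ℓ¹ sequence in A, (u_n) is a sequence in A such that the series Σ u_n is weakly unconditionally convergent, and f(u_m w_n) = δ_{mn} for all m, n. Then the closed linear span of (w_n) is a complemented subspace of A isomorphic to ℓ¹. -/

import Mathlib

open Filter Topology ENNReal

/-- A sequence is weakly null if `f (x n) → 0` for every continuous linear functional `f`. -/
def WeaklyNull {A : Type*} [NormedAddCommGroup A] [NormedSpace ℝ A] (x : ℕ → A) : Prop :=
  ∀ f : A →L[ℝ] ℝ, Tendsto (fun n => f (x n)) atTop (𝓝 0)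

/-- A sequence is weakly Cauchy if `f (x n)` converges for every continuous linear functional. -/
def WeaklyCauchy {A : Type*} [NormedAddCommGroup A] [NormedSpace ℝ A] (x : ℕ → A) : Prop :=
  ∀ f : A →L[ℝ] ℝ, ∃ L : ℝ, Tendsto (fun n => f (x n)) atTop (𝓝 L)

/-- `E ⊆ A*` is an L-set: `sup_{f ∈ E} |f (x n)| → 0` for every weakly null `x`. -/
def LSet {A : Type*} [NormedAddCommGroup A] [NormedSpace ℝ A] (E : Set (A →L[ℝ] ℝ)) : Prop :=
  ∀ x : ℕ → A, WeaklyNull x → ∀ ε > (0 : ℝ), ∃ N : ℕ, ∀ n ≥ N, ∀ f ∈ E, |f (x n)| < ε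

/-- A set is weakly precompact if every sequence in it has a weakly Cauchy subsequence. -/
def WeaklyPrecompact {A : Type*} [NormedAddCommGroup A] [NormedSpace ℝ A] (K : Set A) : Prop :=
  ∀ x : ℕ → A, (∀ n, x n ∈ K) → ∃ φ : ℕ → ℕ, StrictMono φ ∧ WeaklyCauchy (x ∘ φ)

/-- A map is completely continuous if it sends weakly null sequences to norm null sequences. -/
def CompletelyContinuous {A B : Type*} [NormedAddCommGroup A] [NormedSpace ℝ A]
    [NormedAddCommGroup B] (T : A → B) : Prop :=
  ∀ x : ℕ → A, WeaklyNull x → Tendsto (fun n => ‖T (x n)‖) atTop (𝓝 0)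

/-- The multiplication operator `T_f : A → A*`, `(T_f a) x = f (a * x)`. -/
noncomputable def Tf {A : Type*} [NormedRing A] [NormedAlgebra ℝ A]
    (f : A →L[ℝ] ℝ) (a : A) : A →L[ℝ] ℝ :=
  f.comp (ContinuousLinearMap.mul ℝ A a)

/-- The multiplication operator `S_f : A → A*`, `(S_f a) x = f (x * a)`. -/
noncomputable def Sf {A : Type*} [NormedRing A] [NormedAlgebra ℝ A]
    (f : A →L[ℝ] ℝ) (a : A) : A →L[ℝ] ℝ :=
  f.comp ((ContinuousLinearMap.mul ℝ A).flip a)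

/-- `w` is an ℓ¹-sequence: equivalent to the unit vector basis of ℓ¹. -/
def IsL1Sequence {A : Type*} [NormedAddCommGroup A] [NormedSpace ℝ A] (w : ℕ → A) : Prop :=
  ∃ c C : ℝ, 0 < c ∧ ∀ (s : Finset ℕ) (lam : ℕ → ℝ),
    c * ∑ n ∈ s, |lam n| ≤ ‖∑ n ∈ s, lam n • w n‖ ∧
      ‖∑ n ∈ s, lam n • w n‖ ≤ C * ∑ n ∈ s, |lam n|

/-- The Schur property: weakly convergent sequences are norm convergent. -/
def SchurProperty (A : Type*) [NormedAddCommGroup A] [NormedSpace ℝ A] : Prop :=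
  ∀ (x : ℕ → A) (L : A),
    (∀ f : A →L[ℝ] ℝ, Tendsto (fun n => f (x n)) atTop (𝓝 (f L))) →
      Tendsto x atTop (𝓝 L)


instance : Fact ((1 : ℝ≥0∞) ≤ 1) := ⟨le_refl 1⟩

lemma wuc_uniform_bound {A : Type*} [NormedAddCommGroup A] [NormedSpace ℝ A] (u : ℕ → A)
    (hu : ∀ g : A →L[ℝ] ℝ, Summable fun n => |g (u n)|) :
    ∃ M : ℝ, 0 ≤ M ∧ ∀ g : A →L[ℝ] ℝ, ∑' n, |g (u n)| ≤ M * ‖g‖ := by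
  set G : Finset ℕ × (ℕ → Bool) → (A →L[ℝ] ℝ) →L[ℝ] ℝ := fun p =>
    ∑ n ∈ p.1, (if p.2 n then (1:ℝ) else -1) • (ContinuousLinearMap.apply ℝ ℝ (u n)) with hG
  have happ : ∀ p g, G p g = ∑ n ∈ p.1, (if p.2 n then (1:ℝ) else -1) * g (u n) := by
    intro p g
    simp only [hG, ContinuousLinearMap.sum_apply]
    refine Finset.sum_congr rfl fun n _ => ?_
    split_ifs <;> simp
  have hpt : ∀ g : A →L[ℝ] ℝ, ∃ C, ∀ p, ‖G p g‖ ≤ C := by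
    intro g
    refine ⟨∑' n, |g (u n)|, fun p => ?_⟩
    rw [happ]
    calc ‖∑ n ∈ p.1, (if p.2 n then (1:ℝ) else -1) * g (u n)‖
        ≤ ∑ n ∈ p.1, ‖(if p.2 n then (1:ℝ) else -1) * g (u n)‖ := norm_sum_le _ _
      _ ≤ ∑ n ∈ p.1, |g (u n)| := by
          refine Finset.sum_le_sum fun n _ => ?_
          rw [Real.norm_eq_abs, abs_mul]
          rcases ite_eq_or_eq (p.2 n = true) (1:ℝ) (-1) with h | h <;> rw [h] <;> simp
      _ ≤ ∑' n, |g (u n)| := Summable.sum_le_tsum _ (fun n _ => abs_nonneg _) (hu g)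
  obtain ⟨C', hC'⟩ := banach_steinhaus hpt
  refine ⟨max C' 0, le_max_right _ _, fun g => ?_⟩
  refine Summable.tsum_le_of_sum_le (hu g) fun s => ?_
  set b : ℕ → Bool := fun n => decide (0 ≤ g (u n)) with hb
  have heq : ∑ n ∈ s, |g (u n)| = G (s, b) g := by
    rw [happ]
    refine Finset.sum_congr rfl fun n _ => ?_
    by_cases h : 0 ≤ g (u n)
    · simp [hb, h, abs_of_nonneg h]
    · simp [hb, h, abs_of_neg (lt_of_not_ge h)]
  calc ∑ n ∈ s, |g (u n)| = G (s, b) g := heq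
    _ ≤ ‖G (s, b) g‖ := le_abs_self _
    _ ≤ ‖G (s, b)‖ * ‖g‖ := (G (s, b)).le_opNorm g
    _ ≤ max C' 0 * ‖g‖ :=
        mul_le_mul_of_nonneg_right (le_trans (hC' _) (le_max_left _ _)) (norm_nonneg _)

theorem complemented_l1_of_wuc {A : Type*} [NormedRing A] [NormedAlgebra ℝ A] [CompleteSpace A]
    (f : A →L[ℝ] ℝ) (w u : ℕ → A) (hw : IsL1Sequence w)
    (hu : ∀ g : A →L[ℝ] ℝ, Summable fun n => |g (u n)|)
    (hδ : ∀ m n : ℕ, f (u m * w n) = if m = n then 1 else 0) :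
    ∃ P : A →L[ℝ] A,
      (∀ y : A, P y ∈ (Submodule.span ℝ (Set.range w)).topologicalClosure) ∧
      (∀ y ∈ (Submodule.span ℝ (Set.range w)).topologicalClosure, P y = y) ∧
      Nonempty
        (((Submodule.span ℝ (Set.range w)).topologicalClosure ≃L[ℝ]
          lp (fun _ : ℕ => ℝ) 1)) := by
  classical
  obtain ⟨c, C, hc, hwb⟩ := hw
  obtain ⟨M, hM0, hM⟩ := wuc_uniform_bound u hu
  -- basic facts about w and C
  have hwC : ∀ n, ‖w n‖ ≤ C := by
    intro n
    have := (hwb {n} (fun _ => 1)).2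
    simpa using this
  have hC0 : (0:ℝ) ≤ C := le_trans (norm_nonneg (w 0)) (hwC 0)
  -- norm on lp 1
  have hp1 : (0:ℝ) < (1 : ℝ≥0∞).toReal := by norm_num
  have hnorm : ∀ x : lp (fun _ : ℕ => ℝ) 1, ‖x‖ = ∑' n, ‖x n‖ := by
    intro x
    rw [lp.norm_eq_tsum_rpow hp1]
    simp [Real.rpow_one]
  have hnsum : ∀ x : lp (fun _ : ℕ => ℝ) 1, Summable fun n => ‖x n‖ := by
    intro x
    have := (lp.memℓp x).summable hp1
    simpa [Real.rpow_one] using this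
  have hsn : ∀ x : lp (fun _ : ℕ => ℝ) 1, Summable fun n => ‖x n • w n‖ := by
    intro x
    refine Summable.of_nonneg_of_le (fun n => norm_nonneg _) (fun n => ?_) ((hnsum x).mul_left C)
    rw [norm_smul]
    calc ‖x n‖ * ‖w n‖ ≤ ‖x n‖ * C :=
          mul_le_mul_of_nonneg_left (hwC n) (norm_nonneg _)
      _ = C * ‖x n‖ := mul_comm _ _
  have hsum : ∀ x : lp (fun _ : ℕ => ℝ) 1, Summable fun n => x n • w n :=
    fun x => (hsn x).of_norm
  -- the map T : lp 1 → A
  let Tlin : lp (fun _ : ℕ => ℝ) 1 →ₗ[ℝ] A :=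
    { toFun := fun x => ∑' n, x n • w n
      map_add' := by
        intro x y
        simp only [lp.coeFn_add, Pi.add_apply, add_smul]
        exact Summable.tsum_add (hsum x) (hsum y)
      map_smul' := by
        intro r x
        simp only [lp.coeFn_smul, Pi.smul_apply, smul_eq_mul, mul_smul, RingHom.id_apply]
        exact Summable.tsum_const_smul r (hsum x) }
  have hTub : ∀ x : lp (fun _ : ℕ => ℝ) 1, ‖Tlin x‖ ≤ C * ‖x‖ := by
    intro x
    rw [hnorm x]
    calc ‖∑' n, x n • w n‖ ≤ ∑' n, ‖x n • w n‖ :=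
          norm_tsum_le_tsum_norm (hsn x)
      _ ≤ ∑' n, C * ‖x n‖ := by
          refine Summable.tsum_le_tsum (fun n => ?_) (hsn x) ((hnsum x).mul_left C)
          rw [norm_smul]
          calc ‖x n‖ * ‖w n‖ ≤ ‖x n‖ * C :=
                mul_le_mul_of_nonneg_left (hwC n) (norm_nonneg _)
            _ = C * ‖x n‖ := mul_comm _ _
      _ = C * ∑' n, ‖x n‖ := tsum_mul_left
  let T : lp (fun _ : ℕ => ℝ) 1 →L[ℝ] A := Tlin.mkContinuous C hTub
  have hTapp : ∀ x : lp (fun _ : ℕ => ℝ) 1, T x = ∑' n, x n • w n := fun _ => rfl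
  -- lower bound for T
  have hTlb : ∀ x : lp (fun _ : ℕ => ℝ) 1, c * ‖x‖ ≤ ‖T x‖ := by
    intro x
    have h1 : Tendsto (fun N => c * ∑ n ∈ Finset.range N, ‖x n‖) atTop (𝓝 (c * ‖x‖)) := by
      rw [hnorm x]
      exact ((hnsum x).hasSum.tendsto_sum_nat).const_mul c
    have h2 : Tendsto (fun N => ‖∑ n ∈ Finset.range N, x n • w n‖) atTop (𝓝 ‖T x‖) := by
      rw [hTapp]
      exact ((hsum x).hasSum.tendsto_sum_nat).norm
    refine le_of_tendsto_of_tendsto' h1 h2 fun N => ?_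
    have := (hwb (Finset.range N) (fun n => x n)).1
    simpa [Real.norm_eq_abs] using this
  -- T is antilipschitz, injective, with closed range
  have hanti : AntilipschitzWith (c⁻¹.toNNReal) T := by
    refine T.antilipschitz_of_bound fun x => ?_
    rw [Real.coe_toNNReal _ (le_of_lt (inv_pos.mpr hc))]
    rw [inv_mul_eq_div, le_div_iff₀ hc, mul_comm]
    exact hTlb x
  have hclosedrange : IsClosed (Set.range T) := hanti.isClosed_range T.uniformContinuous
  -- T single = w
  have hTsingle : ∀ m, T (lp.single 1 m (1:ℝ)) = w m := by
    intro m
    rw [hTapp]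
    rw [tsum_eq_single m (fun n hn => by rw [lp.single_apply_ne 1 m _ hn, zero_smul])]
    rw [lp.single_apply_self, one_smul]
  -- range T = closure of span
  have hrange : LinearMap.range (T : lp (fun _ : ℕ => ℝ) 1 →ₗ[ℝ] A) = (Submodule.span ℝ (Set.range w)).topologicalClosure := by
    refine le_antisymm ?_ ?_
    · rintro y ⟨x, rfl⟩
      have ht : Tendsto (fun s : Finset ℕ => ∑ n ∈ s, x n • w n) atTop (𝓝 (T x)) := by
        rw [hTapp]; exact (hsum x).hasSum
      refine IsClosed.mem_of_tendsto ?_ ht (Filter.Eventually.of_forall fun s => ?_)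
      · exact (Submodule.span ℝ (Set.range w)).isClosed_topologicalClosure
      · exact Submodule.sum_mem _ fun n _ => Submodule.smul_mem _ _
          (Submodule.le_topologicalClosure _ (Submodule.subset_span ⟨n, rfl⟩))
    · refine Submodule.topologicalClosure_minimal _ ?_ ?_
      · rw [Submodule.span_le]
        rintro a ⟨m, rfl⟩
        exact ⟨lp.single 1 m 1, hTsingle m⟩
      · rw [LinearMap.coe_range]
        exact hclosedrange
  -- the coefficient map V
  have hSf : ∀ (y : A) (x : A), Sf f y x = f (x * y) := by
    intro y x
    simp [Sf, ContinuousLinearMap.flip_apply]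
  have hmemV : ∀ y : A, Memℓp (fun n => f (u n * y)) (1 : ℝ≥0∞) := by
    intro y
    refine memℓp_gen ?_
    have := hu (Sf f y)
    simp only [hSf] at this
    simpa [Real.rpow_one, Real.norm_eq_abs] using this
  let Vlin : A →ₗ[ℝ] lp (fun _ : ℕ => ℝ) 1 :=
    { toFun := fun y => ⟨fun n => f (u n * y), hmemV y⟩
      map_add' := by
        intro y z
        exact Subtype.ext (funext fun n => by show f (u n * (y + z)) = _; rw [mul_add, map_add]; rfl)
      map_smul' := by
        intro r y
        refine Subtype.ext (funext fun n => ?_)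
        show f (u n * (r • y)) = _
        rw [mul_smul_comm, map_smul]
        rfl }
  have hVapp : ∀ (y : A) (n : ℕ), (Vlin y : ∀ _ : ℕ, ℝ) n = f (u n * y) := fun _ _ => rfl
  have hSfnorm : ∀ y : A, ‖Sf f y‖ ≤ ‖f‖ * ‖y‖ := by
    intro y
    refine ContinuousLinearMap.opNorm_le_bound _ (mul_nonneg (norm_nonneg f) (norm_nonneg y))
      fun x => ?_
    rw [hSf]
    calc ‖f (x * y)‖ ≤ ‖f‖ * ‖x * y‖ := f.le_opNorm _
      _ ≤ ‖f‖ * (‖x‖ * ‖y‖) := mul_le_mul_of_nonneg_left (norm_mul_le x y) (norm_nonneg f)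
      _ = ‖f‖ * ‖y‖ * ‖x‖ := by ring
  have hVb : ∀ y : A, ‖Vlin y‖ ≤ M * ‖f‖ * ‖y‖ := by
    intro y
    refine lp.norm_le_of_tsum_le hp1 (by positivity) ?_
    have h1 : ∑' n, |f (u n * y)| ≤ M * ‖Sf f y‖ := by
      have := hM (Sf f y)
      simpa only [hSf] using this
    have h2 : M * ‖Sf f y‖ ≤ M * (‖f‖ * ‖y‖) :=
      mul_le_mul_of_nonneg_left (hSfnorm y) hM0
    calc ∑' n, ‖(Vlin y : ∀ _ : ℕ, ℝ) n‖ ^ (1 : ℝ≥0∞).toReal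
        = ∑' n, |f (u n * y)| := by simp [hVapp, Real.rpow_one, Real.norm_eq_abs]
      _ ≤ M * (‖f‖ * ‖y‖) := le_trans h1 h2
      _ = (M * ‖f‖ * ‖y‖) ^ (1 : ℝ≥0∞).toReal := by simp [Real.rpow_one]; ring
  let V : A →L[ℝ] lp (fun _ : ℕ => ℝ) 1 := Vlin.mkContinuous (M * ‖f‖) hVb
  -- the projection
  let P : A →L[ℝ] A := T.comp V
  have hPapp : ∀ y : A, P y = ∑' n, f (u n * y) • w n := fun _ => rfl
  have hPmem : ∀ y : A, P y ∈ (Submodule.span ℝ (Set.range w)).topologicalClosure := by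
    intro y
    rw [← hrange]
    exact ⟨V y, rfl⟩
  have hPw : ∀ m, P (w m) = w m := by
    intro m
    rw [hPapp]
    rw [tsum_eq_single m (fun n hn => by rw [hδ n m, if_neg hn, zero_smul])]
    rw [hδ m m, if_pos rfl, one_smul]
  have hPfix : ∀ y ∈ (Submodule.span ℝ (Set.range w)).topologicalClosure, P y = y := by
    intro y hy
    set D : A →L[ℝ] A := P - ContinuousLinearMap.id ℝ A with hD
    have hker : Submodule.span ℝ (Set.range w) ≤ LinearMap.ker (D : A →ₗ[ℝ] A) := by
      rw [Submodule.span_le]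
      rintro a ⟨m, rfl⟩
      simp only [SetLike.mem_coe, LinearMap.mem_ker]
      show D (w m) = 0
      rw [hD, ContinuousLinearMap.sub_apply, ContinuousLinearMap.id_apply, hPw m, sub_self]
    have hclose : (Submodule.span ℝ (Set.range w)).topologicalClosure ≤ LinearMap.ker (D : A →ₗ[ℝ] A) := by
      refine Submodule.topologicalClosure_minimal _ hker ?_
      exact ContinuousLinearMap.isClosed_ker D
    have := hclose hy
    rw [LinearMap.mem_ker] at this
    have : P y - y = 0 := by
      rw [← this, hD, ContinuousLinearMap.coe_coe, ContinuousLinearMap.sub_apply, ContinuousLinearMap.id_apply]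
    exact sub_eq_zero.mp this
  -- the isomorphism
  haveI : CompleteSpace ((Submodule.span ℝ (Set.range w)).topologicalClosure : Submodule ℝ A) :=
    (Submodule.span ℝ (Set.range w)).isClosed_topologicalClosure.completeSpace_coe
  let T' : lp (fun _ : ℕ => ℝ) 1 →L[ℝ] (Submodule.span ℝ (Set.range w)).topologicalClosure :=
    T.codRestrict _ (fun x => by rw [← hrange]; exact ⟨x, rfl⟩)
  have hinj : LinearMap.ker (T' : lp (fun _ : ℕ => ℝ) 1 →ₗ[ℝ] (Submodule.span ℝ (Set.range w)).topologicalClosure) = ⊥ := by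
    rw [LinearMap.ker_eq_bot']
    intro m h
    have h2 : T m = 0 := congrArg Subtype.val h
    have h3 : T m = T 0 := by rw [h2, map_zero]
    exact (hanti.injective h3).trans rfl
  have hsurj : LinearMap.range (T' : lp (fun _ : ℕ => ℝ) 1 →ₗ[ℝ] (Submodule.span ℝ (Set.range w)).topologicalClosure) = ⊤ := by
    rw [LinearMap.range_eq_top]
    rintro ⟨y, hy⟩
    rw [← hrange] at hy
    obtain ⟨x, hx⟩ := hy
    exact ⟨x, Subtype.ext hx⟩
  exact ⟨P, hPmem, hPfix, ⟨(ContinuousLinearEquiv.ofBijective T' hinj hsurj).symm⟩⟩
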